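/- arXiv:1002.4978 — 2 statements merged into one kernel-verified Lean document; each statement's English description precedes it below -/
import Mathlib

section
/- The set function C_V satisfies: (i) C_V(E) ≤ sup_{y ∈ E} (∫_Ω K^Ω(x,y) V(x) ρ(x) dx)^{-1} for every Borel set E ⊂ ∂Ω, with equality when E is compact; (ii) C_V(E₁ ∪ E₂) = max{C_V(E₁), C_V(E₂)} for all Borel sets E₁, E₂ ⊂ ∂Ω. -/
/- Common setup for the formalization of
   "Boundary value problems with measures for elliptic equations with singular potentials"
   by L. Véron and C. Yarur.

   Ω ⊂ ℝ^N is a bounded C² domain, V ∈ L^∞_loc(Ω) is a (nonnegative) potential,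
   ρ is the first eigenfunction of -Δ in W₀^{1,2}(Ω), K = K^Ω is the Poisson kernel of Ω,
   nrm is the outward unit normal field on ∂Ω. -/

noncomputable section

open MeasureTheory Metric Set Filter Topology ENNReal

/-- Euclidean space ℝ^N. -/
abbrev Euc (N : ℕ) := EuclideanSpace ℝ (Fin N)

variable {N : ℕ}

/-- The Laplacian Δf(x), computed as the trace of the second derivative on the
standard orthonormal basis. -/
def lap (f : Euc N → ℝ) (x : Euc N) : ℝ :=
  ∑ i : Fin N,
    iteratedFDeriv ℝ 2 f x ![EuclideanSpace.single i (1 : ℝ), EuclideanSpace.single i (1 : ℝ)]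

/-- A bounded open set with C² boundary: near every boundary point, Ω is the sublevel
set of a C² function with nonvanishing gradient. -/
def IsC2Domain (Ω : Set (Euc N)) : Prop :=
  IsOpen Ω ∧ Bornology.IsBounded Ω ∧ Ω.Nonempty ∧
  ∀ z ∈ frontier Ω, ∃ U : Set (Euc N), IsOpen U ∧ z ∈ U ∧
    ∃ f : Euc N → ℝ, ContDiffOn ℝ 2 f U ∧
      (∀ x ∈ U, (x ∈ Ω ↔ f x < 0) ∧ (x ∈ frontier Ω ↔ f x = 0)) ∧
      ∀ x ∈ U, fderiv ℝ f x ≠ 0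

/-- The outward unit normal field on ∂Ω. -/
def IsOuterNormal (Ω : Set (Euc N)) (nrm : Euc N → Euc N) : Prop :=
  ∀ y ∈ frontier Ω, ‖nrm y‖ = 1 ∧ ∀ᶠ t in 𝓝[>] (0 : ℝ), y + t • nrm y ∉ closure Ω

/-- The normal derivative ∂ζ/∂n of ζ at a boundary point y. -/
def normalDeriv (Ω : Set (Euc N)) (nrm : Euc N → Euc N) (ζ : Euc N → ℝ) (y : Euc N) : ℝ :=
  fderivWithin ℝ ζ (closure Ω) y (nrm y)

/-- Test functions for the weak formulation: ζ ∈ C¹(Ω̄), ζ = 0 on ∂Ω, Δζ ∈ L^∞(Ω). -/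
def IsTestFun (Ω : Set (Euc N)) (ζ : Euc N → ℝ) : Prop :=
  ContDiffOn ℝ 1 ζ (closure Ω) ∧ (∀ y ∈ frontier Ω, ζ y = 0) ∧
  ∃ C : ℝ, ∀ x ∈ Ω, |lap ζ x| ≤ C

/-- V ∈ L^∞_loc(Ω). -/
def LocBddOn (Ω : Set (Euc N)) (V : Euc N → ℝ) : Prop :=
  ∀ K : Set (Euc N), K ⊆ Ω → IsCompact K → ∃ C : ℝ, ∀ x ∈ K, |V x| ≤ C

/-- ρ is the (positive, normalized up to a constant) first eigenfunction of -Δ in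
W₀^{1,2}(Ω), with eigenvalue lam > 0. -/
def IsFirstEigenfunction (Ω : Set (Euc N)) (ρ : Euc N → ℝ) : Prop :=
  ∃ lam : ℝ, 0 < lam ∧ ContinuousOn ρ (closure Ω) ∧ ContDiffOn ℝ 2 ρ Ω ∧
    (∀ x ∈ Ω, 0 < ρ x) ∧ (∀ y ∈ frontier Ω, ρ y = 0) ∧
    ∀ x ∈ Ω, - lap ρ x = lam * ρ x

/-- A bounded (Radon) measure on ∂Ω: a finite measure concentrated on the boundary. -/
def BoundaryMeasure (Ω : Set (Euc N)) (μ : Measure (Euc N)) : Prop :=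
  IsFiniteMeasure μ ∧ μ (frontier Ω)ᶜ = 0

/-- u is a weak solution of -Δu + Vu = 0 in Ω, u = μ on ∂Ω (μ a positive bounded
measure on ∂Ω): u ∈ L¹(Ω), Vu ∈ L¹_ρ(Ω) and
∫_Ω (-uΔζ + Vuζ) = -∫_{∂Ω} (∂ζ/∂n) dμ for every test function ζ. -/
def IsWeakSolution (Ω : Set (Euc N)) (V ρ : Euc N → ℝ) (nrm : Euc N → Euc N)
    (μ : Measure (Euc N)) (u : Euc N → ℝ) : Prop :=
  IntegrableOn u Ω volume ∧
  IntegrableOn (fun x => V x * u x * ρ x) Ω volume ∧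
  ∀ ζ : Euc N → ℝ, IsTestFun Ω ζ →
    ∫ x in Ω, (-(u x) * lap ζ x + V x * u x * ζ x) =
      - ∫ y, normalDeriv Ω nrm ζ y ∂μ

/-- Weak solution for a signed boundary measure μ = μp - μm. -/
def IsWeakSolutionSigned (Ω : Set (Euc N)) (V ρ : Euc N → ℝ) (nrm : Euc N → Euc N)
    (μp μm : Measure (Euc N)) (u : Euc N → ℝ) : Prop :=
  IntegrableOn u Ω volume ∧
  IntegrableOn (fun x => V x * u x * ρ x) Ω volume ∧
  ∀ ζ : Euc N → ℝ, IsTestFun Ω ζ →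
    ∫ x in Ω, (-(u x) * lap ζ x + V x * u x * ζ x) =
      - (∫ y, normalDeriv Ω nrm ζ y ∂μp - ∫ y, normalDeriv Ω nrm ζ y ∂μm)

/-- μ is a good measure: the boundary value problem with data μ admits a weak solution. -/
def GoodMeasure (Ω : Set (Euc N)) (V ρ : Euc N → ℝ) (nrm : Euc N → Euc N)
    (μ : Measure (Euc N)) : Prop :=
  ∃ u : Euc N → ℝ, IsWeakSolution Ω V ρ nrm μ u

/-- The Poisson potential 𝕂[μ](x) = ∫_{∂Ω} K(x,y) dμ(y), as an extended real. -/
def poissonPot (K : Euc N → Euc N → ℝ) (μ : Measure (Euc N)) (x : Euc N) : ℝ≥0∞ :=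
  ∫⁻ y, ENNReal.ofReal (K x y) ∂μ

/-- K is the Poisson kernel of the operator -Δ + W in Ω: K ≥ 0, K(x,·) is continuous on
∂Ω, and for every bounded measure μ on ∂Ω the function x ↦ ∫_{∂Ω} K(x,y) dμ(y)
is the weak solution of -Δu + Wu = 0, u = μ on ∂Ω.  (`W = 0` gives the usual
Poisson kernel K^Ω of Ω.) -/
def IsPoissonKernelFor (Ω : Set (Euc N)) (W ρ : Euc N → ℝ) (nrm : Euc N → Euc N)
    (K : Euc N → Euc N → ℝ) : Prop :=
  (∀ x ∈ Ω, ∀ y ∈ frontier Ω, 0 ≤ K x y) ∧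
  (∀ x ∈ Ω, ContinuousOn (fun y => K x y) (frontier Ω)) ∧
  ∀ μ : Measure (Euc N), BoundaryMeasure Ω μ →
    IsWeakSolution Ω W ρ nrm μ (fun x => ∫ y, K x y ∂μ)

/-- A positive measure μ on ∂Ω is admissible: ∫_Ω 𝕂[μ] V ρ dx < ∞. -/
def Admissible (Ω : Set (Euc N)) (V ρ : Euc N → ℝ) (K : Euc N → Euc N → ℝ)
    (μ : Measure (Euc N)) : Prop :=
  ∫⁻ x in Ω, poissonPot K μ x * ENNReal.ofReal (V x * ρ x) < ⊤

/-- The singular boundary set Z_V = {y ∈ ∂Ω : ∫_Ω K^Ω(x,y) V(x) ρ(x) dx = ∞}. -/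
def ZV (Ω : Set (Euc N)) (V ρ : Euc N → ℝ) (K : Euc N → Euc N → ℝ) : Set (Euc N) :=
  {y | y ∈ frontier Ω ∧ ∫⁻ x in Ω, ENNReal.ofReal (K x y * V x * ρ x) = ⊤}

/-- Uniform vanishing condition (2.19): ∫_E K^Ω(x,y) V(x) ρ(x) dx → 0 as |E| → 0,
uniformly with respect to y ∈ ∂Ω. -/
def UnifVanishing (Ω : Set (Euc N)) (V ρ : Euc N → ℝ) (K : Euc N → Euc N → ℝ) : Prop :=
  ∀ ε : ℝ, 0 < ε → ∃ δ : ℝ, 0 < δ ∧ ∀ E : Set (Euc N), E ⊆ Ω → MeasurableSet E →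
    volume E < ENNReal.ofReal δ →
    ∀ y ∈ frontier Ω, ∫⁻ x in E, ENNReal.ofReal (K x y * V x * ρ x) < ENNReal.ofReal ε

/-- G is the Green kernel of -Δ in Ω: G ≥ 0, symmetric, and u = 𝔾[f] satisfies
-Δu = f, u = 0 on ∂Ω weakly, for nonnegative data f. -/
def IsGreenKernel (Ω : Set (Euc N)) (G : Euc N → Euc N → ℝ) : Prop :=
  (∀ x y, 0 ≤ G x y) ∧ (∀ x y, G x y = G y x) ∧
  ∀ f : Euc N → ℝ, (∀ x, 0 ≤ f x) →
    IntegrableOn (fun x => ∫ y in Ω, G x y * f y) Ω volume →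
    IntegrableOn f Ω volume →
    ∀ ζ : Euc N → ℝ, IsTestFun Ω ζ →
      ∫ x in Ω, -(∫ y in Ω, G x y * f y) * lap ζ x = ∫ x in Ω, f x * ζ x

/-- KV = K_V^Ω is the relaxed kernel of -Δ + V in Ω: the decreasing limit of the Poisson
kernels of -Δ + Vχ_{Ω_n}, for an increasing exhaustion {Ω_n} of Ω by smooth domains
with closures contained in Ω. -/
def IsRelaxedKernel (Ω : Set (Euc N)) (V ρ : Euc N → ℝ) (nrm : Euc N → Euc N)
    (KV : Euc N → Euc N → ℝ) : Prop :=
  ∃ Ωn : ℕ → Set (Euc N),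
    (∀ n, IsOpen (Ωn n) ∧ closure (Ωn n) ⊆ Ωn (n + 1) ∧ closure (Ωn n) ⊆ Ω) ∧
    (⋃ n, Ωn n) = Ω ∧
    ∃ Kn : ℕ → Euc N → Euc N → ℝ,
      (∀ n, IsPoissonKernelFor Ω ((Ωn n).indicator V) ρ nrm (Kn n)) ∧
      (∀ x ∈ Ω, ∀ y ∈ frontier Ω, Antitone fun n => Kn n x y) ∧
      (∀ x ∈ Ω, ∀ y ∈ frontier Ω, Tendsto (fun n => Kn n x y) atTop (𝓝 (KV x y)))

/-- ν* is the reduced measure associated to ν: the boundary trace of the nonnegative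
harmonic function 𝕂_V[ν] + 𝔾[V 𝕂_V[ν]], i.e. the bounded measure ν* on ∂Ω with
𝕂_V[ν] + 𝔾[V 𝕂_V[ν]] = 𝕂[ν*] in Ω. -/
def IsReducedMeasure (Ω : Set (Euc N)) (V : Euc N → ℝ) (K G KV : Euc N → Euc N → ℝ)
    (ν νstar : Measure (Euc N)) : Prop :=
  BoundaryMeasure Ω νstar ∧
  ∀ x ∈ Ω, (∫ y, KV x y ∂ν) + (∫ y in Ω, G x y * V y * (∫ z, KV y z ∂ν)) =
    ∫ y, K x y ∂νstar

/-- The vanishing set Z_V^* of the kernel K_V^Ω (independent of x ∈ Ω by Harnack). -/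
def ZVstar (Ω : Set (Euc N)) (KV : Euc N → Euc N → ℝ) : Set (Euc N) :=
  {y | y ∈ frontier Ω ∧ ∀ x ∈ Ω, KV x y = 0}

/-- u ∈ C(Ω) is a positive solution of -Δu + Vu = 0 in Ω (in the sense of
distributions). -/
def IsPositiveSolution (Ω : Set (Euc N)) (V u : Euc N → ℝ) : Prop :=
  ContinuousOn u Ω ∧ (∀ x ∈ Ω, 0 < u x) ∧
  ∀ ζ : Euc N → ℝ, ContDiff ℝ (⊤ : ℕ∞) ζ → HasCompactSupport ζ → tsupport ζ ⊆ Ω →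
    ∫ x in Ω, (-(u x) * lap ζ x + V x * u x * ζ x) = 0

/-- z ∈ ∂Ω is a regular boundary point of u: ∫_{U∩Ω} V u ρ dx < ∞ for some
neighborhood U of z. -/
def IsRegularPoint (Ω : Set (Euc N)) (V ρ u : Euc N → ℝ) (z : Euc N) : Prop :=
  z ∈ frontier Ω ∧ ∃ U : Set (Euc N), IsOpen U ∧ z ∈ U ∧
    ∫⁻ x in U ∩ Ω, ENNReal.ofReal (V x * u x * ρ x) < ⊤

/-- The set R(u) of regular boundary points of u. -/
def regSet (Ω : Set (Euc N)) (V ρ u : Euc N → ℝ) : Set (Euc N) :=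
  {z | IsRegularPoint Ω V ρ u z}

/-- The singular boundary set S(u) = ∂Ω ∖ R(u). -/
def singSet (Ω : Set (Euc N)) (V ρ u : Euc N → ℝ) : Set (Euc N) :=
  frontier Ω \ regSet Ω V ρ u

/-- Σ_ε = {x ∈ Ω : dist(x,∂Ω) = ε}. -/
def SigmaSet (Ω : Set (Euc N)) (ε : ℝ) : Set (Euc N) :=
  {x | x ∈ Ω ∧ infDist x (frontier Ω) = ε}

/-- σ is the projection onto ∂Ω, defined (and unique) for points at distance ≤ ε₀ from
the boundary. -/
def IsBoundaryProjection (Ω : Set (Euc N)) (ε₀ : ℝ) (σ : Euc N → Euc N) : Prop :=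
  ∀ x ∈ Ω, infDist x (frontier Ω) ≤ ε₀ →
    σ x ∈ frontier Ω ∧ dist x (σ x) = infDist x (frontier Ω)

/-- γ is the boundary trace of v : for every ζ ∈ C(∂Ω),
∫_{Σ_ε} ζ(σ(x)) v(x) dS(x) → ∫_{∂Ω} ζ dγ as ε → 0, where dS is the surface
((N-1)-dimensional Hausdorff) measure. -/
def HasBoundaryTrace (Ω : Set (Euc N)) (σ : Euc N → Euc N) (v : Euc N → ℝ)
    (γ : Measure (Euc N)) : Prop :=
  BoundaryMeasure Ω γ ∧
  ∀ ζ : Euc N → ℝ, Continuous ζ →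
    Tendsto (fun ε : ℝ => ∫ x in SigmaSet Ω ε, ζ (σ x) * v x ∂(μH[(N : ℝ) - 1]))
      (𝓝[>] 0) (𝓝 (∫ z, ζ z ∂γ))

/-- μu is the regular part of the boundary trace of u: a Radon measure on R(u)
(finite on compact subsets of R(u), vanishing outside R(u)) such that
∫_{Σ_ε} ζ(σ(x)) u(x) dS(x) → ∫ ζ dμu for every ζ ∈ C_c(R(u)). -/
def IsRegularTrace (Ω : Set (Euc N)) (V ρ u : Euc N → ℝ) (σ : Euc N → Euc N)
    (μu : Measure (Euc N)) : Prop :=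
  μu (regSet Ω V ρ u)ᶜ = 0 ∧
  (∀ Kc : Set (Euc N), IsCompact Kc → Kc ⊆ regSet Ω V ρ u → μu Kc < ⊤) ∧
  ∀ ζ : Euc N → ℝ, Continuous ζ →
    closure {z | z ∈ frontier Ω ∧ ζ z ≠ 0} ⊆ regSet Ω V ρ u →
    Tendsto (fun ε : ℝ => ∫ x in SigmaSet Ω ε, ζ (σ x) * u x ∂(μH[(N : ℝ) - 1]))
      (𝓝[>] 0) (𝓝 (∫ z, ζ z ∂μu))

/-- The sweeping measure ν_S(A) = sup{γ_u(μ)(A) : μ ∈ 𝔐₊(S(u)) good}, where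
γ_u(μ) is the boundary trace of v_μ = min{u, u_μ}. -/
def nuS (Ω : Set (Euc N)) (V ρ : Euc N → ℝ) (nrm σ : Euc N → Euc N) (u : Euc N → ℝ)
    (A : Set (Euc N)) : ℝ≥0∞ :=
  ⨆ (μ : Measure (Euc N)) (_ : BoundaryMeasure Ω μ) (_ : μ (singSet Ω V ρ u)ᶜ = 0)
    (uμ : Euc N → ℝ) (_ : IsWeakSolution Ω V ρ nrm μ uμ)
    (γ : Measure (Euc N)) (_ : HasBoundaryTrace Ω σ (fun x => min (u x) (uμ x)) γ),
      γ A

/-- The capacity C_V(E) = sup{μ(E) : μ ∈ 𝔐₊(∂Ω), μ(Eᶜ) = 0, ‖V𝕂[μ]‖_{L¹_ρ} ≤ 1}. -/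
def capaV (Ω : Set (Euc N)) (V ρ : Euc N → ℝ) (K : Euc N → Euc N → ℝ)
    (E : Set (Euc N)) : ℝ≥0∞ :=
  ⨆ (μ : Measure (Euc N)) (_ : IsFiniteMeasure μ) (_ : μ ((frontier Ω)ᶜ) = 0)
    (_ : μ Eᶜ = 0)
    (_ : ∫⁻ x in Ω, poissonPot K μ x * ENNReal.ofReal (V x * ρ x) ≤ 1), μ E


section AuxCapacity

open MeasureTheory Set Filter Topology ENNReal

variable {X : Type*} [MetricSpace X] [MeasurableSpace X] [BorelSpace X]
  [SecondCountableTopology X]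



/-- Essential measurable minorant: a measurable `w' ≤ w` such that
`∫ h·w = ∫ h·w'` for every finite-valued measurable `h`. -/
lemma exists_essential_minorant {α : Type*} [MeasurableSpace α] (ν : Measure α) [IsFiniteMeasure ν] (w : α → ℝ≥0∞) :
    ∃ w' : α → ℝ≥0∞, Measurable w' ∧ (∀ x, w' x ≤ w x) ∧
      ∀ h : α → ℝ≥0∞, Measurable h → (∀ x, h x ≠ ⊤) →
        ∫⁻ x, h x * w x ∂ν = ∫⁻ x, h x * w' x ∂ν := by
  set t : ℝ≥0∞ → ℝ≥0∞ := fun a => (a + 1)⁻¹ with ht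
  have tanti : ∀ {a b : ℝ≥0∞}, a ≤ b → t b ≤ t a := fun {a b} h =>
    ENNReal.inv_le_inv.2 (add_le_add_left h 1)
  have tstrict : ∀ {a b : ℝ≥0∞}, a < b → t b < t a := fun {a b} h =>
    ENNReal.inv_lt_inv.2 (ENNReal.add_lt_add_right one_ne_top h)
  have tle1 : ∀ a, t a ≤ 1 := fun a => ENNReal.inv_le_one.2 le_add_self
  have tint : ∀ g : α → ℝ≥0∞, ∫⁻ x, t (g x) ∂ν ≠ ⊤ := by
    intro g
    refine ne_of_lt (lt_of_le_of_lt (lintegral_mono fun x => tle1 _) ?_)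
    simpa using measure_lt_top ν univ
  -- the family of measurable minorants
  let G := {g : α → ℝ≥0∞ // Measurable g ∧ ∀ x, g x ≤ w x}
  have : Nonempty G := ⟨⟨fun _ => 0, measurable_const, fun x => zero_le⟩⟩
  set β : ℝ≥0∞ := ⨅ g : G, ∫⁻ x, t (g.1 x) ∂ν with hβ
  have tmeas : Measurable t := (measurable_id.add_const 1).inv
  have hβtop : β ≠ ⊤ := by
    intro h
    have h2 := iInf_le (fun g : G => ∫⁻ x, t (g.1 x) ∂ν) (Classical.arbitrary G)
    rw [← hβ, h, top_le_iff] at h2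
    exact tint _ h2
  have hseq : ∀ n : ℕ, ∃ g : G, ∫⁻ x, t (g.1 x) ∂ν < β + (n + 1 : ℝ≥0∞)⁻¹ := by
    intro n
    rw [← iInf_lt_iff]
    exact ENNReal.lt_add_right hβtop (by simp)
  choose gseq hgseq using hseq
  set w' : α → ℝ≥0∞ := fun x => ⨆ n, (gseq n).1 x with hw'
  have w'meas : Measurable w' := Measurable.iSup fun n => (gseq n).2.1
  have w'le : ∀ x, w' x ≤ w x := fun x => iSup_le fun n => (gseq n).2.2 x
  have w'G : ∫⁻ x, t (w' x) ∂ν = β := by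
    refine le_antisymm ?_ (iInf_le _ (⟨w', w'meas, w'le⟩ : G))
    have h1 : ∀ n : ℕ, ∫⁻ x, t (w' x) ∂ν ≤ β + (n + 1 : ℝ≥0∞)⁻¹ := fun n =>
      le_trans (lintegral_mono fun x => tanti (le_iSup (fun m => (gseq m).1 x) n)) (hgseq n).le
    refine ENNReal.le_of_forall_pos_le_add fun ε hε hβ' => ?_
    obtain ⟨n, hn⟩ := ENNReal.exists_inv_nat_lt (by exact_mod_cast hε.ne' : (ε : ℝ≥0∞) ≠ 0)
    refine (h1 n).trans (add_le_add_right ?_ β)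
    exact le_trans (ENNReal.inv_le_inv.2 (by exact_mod_cast Nat.le_succ n)) hn.le
  have key : ∀ g : α → ℝ≥0∞, Measurable g → (∀ x, g x ≤ w x) → ∀ᵐ x ∂ν, g x ≤ w' x := by
    intro g gmeas gle
    by_contra hc
    have hA : ν {x | w' x < g x} ≠ 0 := by
      simp only [ae_iff, not_le] at hc
      exact hc
    set g'' : α → ℝ≥0∞ := fun x => max (g x) (w' x) with hg''
    have hG : ∫⁻ x, t (g'' x) ∂ν < ∫⁻ x, t (w' x) ∂ν := by
      refine lintegral_strict_mono_of_ae_le_of_ae_lt_on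
        (tmeas.comp w'meas).aemeasurable ?_ ?_ hA ?_
      · exact tint _
      · exact Eventually.of_forall fun x => tanti (le_max_right _ _)
      · exact Eventually.of_forall fun x hx => tstrict (lt_of_lt_of_le hx (le_max_left _ _))
    rw [w'G] at hG
    exact absurd (iInf_le (fun g : G => ∫⁻ x, t (g.1 x) ∂ν)
      (⟨g'', gmeas.max w'meas, fun x => max_le (gle x) (w'le x)⟩ : G)) (not_le.2 hG)
  refine ⟨w', w'meas, w'le, fun h hmeas hfin => ?_⟩
  refine le_antisymm ?_ (lintegral_mono fun x => mul_le_mul_right (w'le x) _)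
  rw [lintegral_def]
  refine iSup₂_le fun φ hφ => ?_
  set v : α → ℝ≥0∞ := fun x => if h x = 0 then 0 else φ x / h x with hv
  have vmeas : Measurable v := Measurable.ite (hmeas (measurableSet_singleton 0))
    measurable_const (φ.measurable.div hmeas)
  have vle : ∀ x, v x ≤ w x := by
    intro x
    by_cases h0 : h x = 0
    · simp [hv, h0]
    · simp only [hv, if_neg h0]
      rw [ENNReal.div_le_iff_le_mul (Or.inl h0) (Or.inl (hfin x))]
      exact le_trans (hφ x) (by rw [mul_comm])
  have hφv : ∀ x, φ x ≤ h x * v x := by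
    intro x
    by_cases h0 : h x = 0
    · have h1 := hφ x
      simp only [h0, zero_mul] at h1
      simp only [hv, h0, if_pos, mul_zero, nonpos_iff_eq_zero] at h1 ⊢
      simp [h1]
    · simp only [hv, if_neg h0]
      rw [ENNReal.mul_div_cancel h0 (hfin x)]
  calc φ.lintegral ν = ∫⁻ x, φ x ∂ν := (φ.lintegral_eq_lintegral ν).symm
    _ ≤ ∫⁻ x, h x * w' x ∂ν := by
        refine lintegral_mono_ae ?_
        filter_upwards [key v vmeas vle] with x hx
        exact le_trans (hφv x) (mul_le_mul_right hx _)

lemma lintegral_poisson_swap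
    (F : Set X) (hFclosed : IsClosed F) (hFne : F.Nonempty)
    (ν : Measure X) [IsFiniteMeasure ν]
    (g : X → X → ℝ≥0∞)
    (hgfin : ∀ x y, g x y ≠ ⊤)
    (hgcont : ∀ᵐ x ∂ν, ContinuousOn (g x) F)
    (hgmeas : ∀ y ∈ F, AEMeasurable (fun x => g x y) ν)
    (w' : X → ℝ≥0∞) (hw'meas : Measurable w') (hw'fin : ∀ x, w' x ≠ ⊤)
    (μ : Measure X) [IsFiniteMeasure μ] (hμF : μ Fᶜ = 0) :
    ∫⁻ y, (∫⁻ x, g x y * w' x ∂ν) ∂μ ≤ ∫⁻ x, (∫⁻ y, g x y ∂μ) * w' x ∂ν := by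
  classical
  -- dense sequence in F
  have : Nonempty F := hFne.to_subtype
  obtain ⟨u, hu⟩ := TopologicalSpace.exists_dense_seq F
  set d : ℕ → X := fun k => (u k).1 with hd
  have hdF : ∀ k, d k ∈ F := fun k => (u k).2
  have hdense : ∀ y ∈ F, ∀ ε : ℝ, 0 < ε → ∃ k, dist y (d k) < ε := by
    intro y hy ε hε
    obtain ⟨k, hk⟩ := Metric.denseRange_iff.1 hu ⟨y, hy⟩ ε hε
    exact ⟨k, by simpa [Subtype.dist_eq] using hk⟩
  -- measurable versions of g · (d k)
  set gz : ℕ → X → ℝ≥0∞ := fun k => (hgmeas (d k) (hdF k)).mk _ with hgz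
  have hgzmeas : ∀ k, Measurable (gz k) := fun k => (hgmeas (d k) (hdF k)).measurable_mk
  have hgood : ∀ᵐ x ∂ν, (∀ k, gz k x = g x (d k)) ∧ ContinuousOn (g x) F := by
    refine ((ae_all_iff).2 fun k => ?_).and hgcont
    exact ((hgmeas (d k) (hdF k)).ae_eq_mk).symm
  -- radii
  set rr : ℕ → ℝ := fun n => 1 / (n + 1) with hrr
  have hrrpos : ∀ n, 0 < rr n := fun n => by positivity
  have hrrto : Tendsto rr atTop (𝓝 0) := tendsto_one_div_add_atTop_nhds_zero_nat
  -- cells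
  set Cset : ℕ → ℕ → Set X := fun n j =>
    (F ∩ Metric.ball (d j) (rr n)) \ (⋃ k ∈ Finset.range j, Metric.ball (d k) (rr n)) with hCset
  have hCmeas : ∀ n j, MeasurableSet (Cset n j) :=
    fun n j => ((hFclosed.measurableSet.inter measurableSet_ball)).diff
      (MeasurableSet.biUnion (Finset.range j).countable_toSet fun k _ => measurableSet_ball)
  have hCdisj : ∀ n j j' y, y ∈ Cset n j → y ∈ Cset n j' → j = j' := by
    intro n j j' y hj hj'
    by_contra hne
    rcases lt_or_gt_of_ne hne with h | h
    · exact hj'.2 (mem_biUnion (Finset.mem_range.2 h) hj.1.2)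
    · exact hj.2 (mem_biUnion (Finset.mem_range.2 h) hj'.1.2)
  have hex : ∀ n, ∀ y ∈ F, ∃ j, dist y (d j) < rr n := fun n y hy =>
    hdense y hy (rr n) (hrrpos n)
  set jfun : ℕ → X → ℕ := fun n y => if hy : ∃ j, dist y (d j) < rr n then Nat.find hy else 0
    with hjfun
  have hjmem : ∀ n, ∀ y ∈ F, y ∈ Cset n (jfun n y) := by
    intro n y hy
    have hy' := hex n y hy
    refine ⟨⟨hy, ?_⟩, ?_⟩
    · simp only [hjfun, dif_pos hy', Metric.mem_ball]
      exact Nat.find_spec hy'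
    · intro hmem
      obtain ⟨k, hk, hk2⟩ := by simpa using hmem
      have := Nat.find_min hy' (by simpa [hjfun, dif_pos hy'] using hk)
      exact this hk2
  -- the inf minorants
  set h : ℕ → ℕ → X → ℝ≥0∞ := fun n j x =>
    ⨅ k : {k : ℕ // dist (d k) (d j) < rr n + rr n}, gz k.1 x with hh
  have hhmeas : ∀ n j, Measurable (h n j) :=
    fun n j => Measurable.iInf fun k => hgzmeas k.1
  -- Claim A
  have claimA : ∀ x, (∀ k, gz k x = g x (d k)) → ContinuousOn (g x) F →
      ∀ n j, ∀ y ∈ Cset n j, h n j x ≤ g x y := by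
    intro x hgzx hcx n j y hy
    obtain ⟨⟨hyF, hyball⟩, -⟩ := hy
    rw [Metric.mem_ball] at hyball
    refine ENNReal.le_of_forall_pos_le_add fun ε hε _ => ?_
    have hcw : Tendsto (g x) (𝓝[F] y) (𝓝 (g x y)) := hcx y hyF
    have hlt : g x y < g x y + ε :=
      ENNReal.lt_add_right (hgfin x y) (by exact_mod_cast hε.ne')
    have hev := hcw (Iio_mem_nhds hlt)
    rw [mem_map, Metric.mem_nhdsWithin_iff] at hev
    obtain ⟨δ, hδ, hball⟩ := hev
    obtain ⟨k, hk⟩ := hdense y hyF (min δ (rr n)) (lt_min hδ (hrrpos n))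
    have hkF : d k ∈ Metric.ball y δ ∩ F :=
      ⟨by rw [Metric.mem_ball, dist_comm]; exact hk.trans_le (min_le_left _ _), hdF k⟩
    have hgk : g x (d k) < g x y + ε := by simpa using hball hkF
    have hkj : dist (d k) (d j) < rr n + rr n := by
      calc dist (d k) (d j) ≤ dist (d k) y + dist y (d j) := dist_triangle _ _ _
        _ < rr n + rr n := by
            rw [dist_comm (d k) y]
            exact add_lt_add (hk.trans_le (min_le_right _ _)) hyball
    calc h n j x ≤ gz k x := iInf_le _ (⟨k, hkj⟩ : {k : ℕ // dist (d k) (d j) < rr n + rr n})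
      _ = g x (d k) := hgzx k
      _ ≤ g x y + ε := hgk.le
  -- Claim B
  have claimB : ∀ x, (∀ k, gz k x = g x (d k)) → ContinuousOn (g x) F →
      ∀ y ∈ F, Tendsto (fun n => h n (jfun n y) x) atTop (𝓝 (g x y)) := by
    intro x hgzx hcx y hyF
    refine tendsto_order.2 ⟨fun a ha => ?_, fun a ha => ?_⟩
    · obtain ⟨b, hab, hb⟩ := exists_between ha
      have hcw : Tendsto (g x) (𝓝[F] y) (𝓝 (g x y)) := hcx y hyF
      have hev := hcw (Ioi_mem_nhds hb)
      rw [mem_map, Metric.mem_nhdsWithin_iff] at hev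
      obtain ⟨δ, hδ, hball⟩ := hev
      have hsmall : ∀ᶠ n in atTop, rr n + (rr n + rr n) < δ :=
        Tendsto.eventually_lt_const hδ (by simpa using (hrrto.add (hrrto.add hrrto)))
      filter_upwards [hsmall] with n hn
      have hymem := hjmem n y hyF
      have hyj : dist y (d (jfun n y)) < rr n := by
        have := hymem.1.2; rwa [Metric.mem_ball] at this
      refine lt_of_lt_of_le hab (le_iInf fun k => ?_)
      have hky : dist (d k.1) y < δ := by
        calc dist (d k.1) y ≤ dist (d k.1) (d (jfun n y)) + dist (d (jfun n y)) y :=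
              dist_triangle _ _ _
          _ < (rr n + rr n) + rr n := add_lt_add k.2 (by rwa [dist_comm])
          _ < δ := by linarith [hn]
      have hbk : b < g x (d k.1) := by simpa using hball ⟨by rwa [Metric.mem_ball], hdF k.1⟩
      rw [hgzx k.1]
      exact hbk.le
    · filter_upwards [] with n
      exact lt_of_le_of_lt (claimA x hgzx hcx n (jfun n y) y (hjmem n y hyF)) ha
  -- the pieces
  set I : ℕ → ℕ → ℝ≥0∞ := fun n j => ∫⁻ x, h n j x * w' x ∂ν with hI
  set φ : ℕ → X → ℝ≥0∞ := fun n y => ∑' j, (Cset n j).indicator (fun _ => I n j) y with hφ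
  have hφmeas : ∀ n, Measurable (φ n) :=
    fun n => Measurable.ennreal_tsum fun j => measurable_const.indicator (hCmeas n j)
  -- step 1
  have step1 : ∀ n, ∫⁻ y, φ n y ∂μ ≤ ∫⁻ x, (∫⁻ y, g x y ∂μ) * w' x ∂ν := by
    intro n
    have e1 : ∫⁻ y, φ n y ∂μ = ∑' j, I n j * μ (Cset n j) := by
      rw [hφ, lintegral_tsum fun j => (measurable_const.indicator (hCmeas n j)).aemeasurable]
      congr 1; ext j
      rw [lintegral_indicator (hCmeas n j), setLIntegral_const]
    have e2 : ∀ j, I n j * μ (Cset n j) = ∫⁻ x, (h n j x * μ (Cset n j)) * w' x ∂ν := by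
      intro j
      rw [hI]
      rw [← lintegral_mul_const' (μ (Cset n j)) _ (measure_ne_top μ _)]
      congr 1; ext x; ring
    have e3 : ∑' j, I n j * μ (Cset n j)
        = ∫⁻ x, (∑' j, h n j x * μ (Cset n j)) * w' x ∂ν := by
      simp_rw [e2]
      rw [← lintegral_tsum (f := fun j x => h n j x * μ (Cset n j) * w' x) fun j =>
        (((hhmeas n j).mul_const _).mul hw'meas).aemeasurable]
      congr 1; ext x
      exact ENNReal.tsum_mul_right
    rw [e1, e3]
    refine lintegral_mono_ae ?_
    filter_upwards [hgood] with x hx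
    refine mul_le_mul_left ?_ _
    have e4 : ∑' j, h n j x * μ (Cset n j)
        = ∫⁻ y, (∑' j, (Cset n j).indicator (fun _ => h n j x) y) ∂μ := by
      rw [lintegral_tsum fun j => (measurable_const.indicator (hCmeas n j)).aemeasurable]
      congr 1; ext j
      rw [lintegral_indicator (hCmeas n j), setLIntegral_const]
    rw [e4]
    refine lintegral_mono_ae ?_
    have hmicro : ∀ᵐ y ∂μ, y ∈ F := by
      rw [ae_iff]
      exact hμF
    filter_upwards [hmicro] with y hyF
    have hj0 := hjmem n y hyF
    rw [tsum_eq_single (jfun n y) ?_]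
    · rw [indicator_of_mem hj0]
      exact claimA x hx.1 hx.2 n (jfun n y) y hj0
    · intro j hj
      refine indicator_of_notMem (fun hmem => hj ?_) _
      exact hCdisj n j (jfun n y) y hmem hj0
  -- step 2
  have step2 : ∀ᵐ y ∂μ, (∫⁻ x, g x y * w' x ∂ν) ≤ liminf (fun n => φ n y) atTop := by
    have hmicro : ∀ᵐ y ∂μ, y ∈ F := by
      rw [ae_iff]; exact hμF
    filter_upwards [hmicro] with y hyF
    have hφy : ∀ n, φ n y = I n (jfun n y) := by
      intro n
      have hj0 := hjmem n y hyF
      have hrfl : φ n y = ∑' j, (Cset n j).indicator (fun _ => I n j) y := rfl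
      rw [hrfl, tsum_eq_single (jfun n y) (fun j hj =>
        indicator_of_notMem (fun hmem => hj (hCdisj n j (jfun n y) y hmem hj0)) _)]
      rw [indicator_of_mem hj0]
    calc ∫⁻ x, g x y * w' x ∂ν
        = ∫⁻ x, liminf (fun n => h n (jfun n y) x * w' x) atTop ∂ν := by
          refine lintegral_congr_ae ?_
          filter_upwards [hgood] with x hx
          exact (Tendsto.liminf_eq (ENNReal.Tendsto.mul_const
            (claimB x hx.1 hx.2 y hyF) (Or.inr (hw'fin x)))).symm
      _ ≤ liminf (fun n => ∫⁻ x, h n (jfun n y) x * w' x ∂ν) atTop :=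
          lintegral_liminf_le' fun n =>
            ((hhmeas n (jfun n y)).mul hw'meas).aemeasurable
      _ = liminf (fun n => φ n y) atTop := by simp_rw [hφy]; rfl
  -- conclude
  calc ∫⁻ y, (∫⁻ x, g x y * w' x ∂ν) ∂μ
      ≤ ∫⁻ y, liminf (fun n => φ n y) atTop ∂μ := lintegral_mono_ae step2
    _ ≤ liminf (fun n => ∫⁻ y, φ n y ∂μ) atTop := lintegral_liminf_le hφmeas
    _ ≤ liminf (fun _ : ℕ => ∫⁻ x, (∫⁻ y, g x y ∂μ) * w' x ∂ν) atTop :=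
        liminf_le_liminf (Eventually.of_forall step1)
    _ = _ := liminf_const _

/-- Tonelli-type inequality for a kernel continuous in `y`, measurable in `x`,
against an arbitrary (possibly non-measurable) weight `w`. -/
lemma lintegral_double_le
    (F : Set X) (hFclosed : IsClosed F) (hFne : F.Nonempty)
    (ν : Measure X) [IsFiniteMeasure ν]
    (g : X → X → ℝ≥0∞) (hgfin : ∀ x y, g x y ≠ ⊤)
    (hgcont : ∀ᵐ x ∂ν, ContinuousOn (g x) F)
    (hgmeas : ∀ y ∈ F, AEMeasurable (fun x => g x y) ν)
    (w : X → ℝ≥0∞) (hwfin : ∀ x, w x ≠ ⊤)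
    (μ : Measure X) [IsFiniteMeasure μ] (hμF : μ Fᶜ = 0) :
    ∫⁻ y, (∫⁻ x, g x y * w x ∂ν) ∂μ ≤ ∫⁻ x, (∫⁻ y, g x y ∂μ) * w x ∂ν := by
  obtain ⟨w', hw'meas, hw'le, hw'key⟩ := exists_essential_minorant ν w
  have hw'fin : ∀ x, w' x ≠ ⊤ := fun x => ne_top_of_le_ne_top (hwfin x) (hw'le x)
  have hcongr : ∀ y ∈ F, ∫⁻ x, g x y * w x ∂ν = ∫⁻ x, g x y * w' x ∂ν := by
    intro y hy
    set m := (hgmeas y hy).mk _ with hm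
    set m' : X → ℝ≥0∞ := fun x => if m x = ⊤ then 0 else m x with hm'
    have hm'meas : Measurable m' := Measurable.ite
      ((hgmeas y hy).measurable_mk (measurableSet_singleton ⊤)) measurable_const
      (hgmeas y hy).measurable_mk
    have hm'fin : ∀ x, m' x ≠ ⊤ := by
      intro x
      by_cases h : m x = ⊤ <;> simp [hm', h]
    have hae : (fun x => g x y) =ᵐ[ν] m' := by
      filter_upwards [(hgmeas y hy).ae_eq_mk] with x hx
      have hmx : m x = g x y := hx.symm
      simp only [hm', hmx, if_neg (hgfin x y)]
    calc ∫⁻ x, g x y * w x ∂ν = ∫⁻ x, m' x * w x ∂ν :=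
          lintegral_congr_ae (hae.mul EventuallyEq.rfl)
      _ = ∫⁻ x, m' x * w' x ∂ν := hw'key m' hm'meas hm'fin
      _ = ∫⁻ x, g x y * w' x ∂ν :=
          (lintegral_congr_ae (hae.mul EventuallyEq.rfl)).symm
  have hμFae : ∀ᵐ y ∂μ, y ∈ F := by rw [ae_iff]; exact hμF
  calc ∫⁻ y, (∫⁻ x, g x y * w x ∂ν) ∂μ = ∫⁻ y, (∫⁻ x, g x y * w' x ∂ν) ∂μ := by
        refine lintegral_congr_ae ?_
        filter_upwards [hμFae] with y hy using hcongr y hy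
    _ ≤ ∫⁻ x, (∫⁻ y, g x y ∂μ) * w' x ∂ν :=
        lintegral_poisson_swap F hFclosed hFne ν g hgfin hgcont hgmeas w' hw'meas hw'fin μ hμF
    _ ≤ ∫⁻ x, (∫⁻ y, g x y ∂μ) * w x ∂ν :=
        lintegral_mono fun x => mul_le_mul_right (hw'le x) _

end AuxCapacity

/-- **Proposition 3.5.** The set function C_V satisfies
C_V(E) ≤ sup_{y∈E} (∫_Ω K^Ω(x,y) V ρ dx)⁻¹ for every Borel E ⊂ ∂Ω, with equality if
E is compact; moreover C_V(E₁ ∪ E₂) = max{C_V(E₁), C_V(E₂)}. -/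
theorem capacity_formula_and_max_property
    {N : ℕ} (hN : 2 ≤ N) (Ω : Set (Euc N)) (hΩ : IsC2Domain Ω)
    (V ρ : Euc N → ℝ) (hV0 : ∀ x ∈ Ω, 0 ≤ V x) (hVloc : LocBddOn Ω V)
    (hρ : IsFirstEigenfunction Ω ρ)
    (nrm : Euc N → Euc N) (hnrm : IsOuterNormal Ω nrm)
    (K : Euc N → Euc N → ℝ) (hK : IsPoissonKernelFor Ω (fun _ => 0) ρ nrm K) :
    (∀ E : Set (Euc N), E ⊆ frontier Ω → MeasurableSet E →
      capaV Ω V ρ K E ≤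
        ⨆ y ∈ E, (∫⁻ x in Ω, ENNReal.ofReal (K x y * V x * ρ x))⁻¹) ∧
    (∀ E : Set (Euc N), E ⊆ frontier Ω → IsCompact E →
      capaV Ω V ρ K E =
        ⨆ y ∈ E, (∫⁻ x in Ω, ENNReal.ofReal (K x y * V x * ρ x))⁻¹) ∧
    (∀ E₁ E₂ : Set (Euc N), E₁ ⊆ frontier Ω → E₂ ⊆ frontier Ω →
      MeasurableSet E₁ → MeasurableSet E₂ →
      capaV Ω V ρ K (E₁ ∪ E₂) = max (capaV Ω V ρ K E₁) (capaV Ω V ρ K E₂)) := by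
  classical
  obtain ⟨hKpos, hKcont, hKsol⟩ := hK
  obtain ⟨hopen, hbdd, -, -⟩ := hΩ
  have hΩm : MeasurableSet Ω := hopen.measurableSet
  haveI hνfin : IsFiniteMeasure (volume.restrict Ω) :=
    ⟨by rw [Measure.restrict_apply_univ]; exact hbdd.measure_lt_top⟩
  set w : Euc N → ℝ≥0∞ := fun x => ENNReal.ofReal (V x * ρ x) with hw
  set c : Euc N → ℝ≥0∞ := fun y => ∫⁻ x in Ω, ENNReal.ofReal (K x y * V x * ρ x) with hc
  have hceq : ∀ y ∈ frontier Ω, c y = ∫⁻ x in Ω, ENNReal.ofReal (K x y) * w x := by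
    intro y hy
    refine setLIntegral_congr_fun hΩm (fun x hx => ?_)
    rw [hw, mul_assoc, ENNReal.ofReal_mul (hKpos x hx y hy)]
  have hgmeas : ∀ y ∈ frontier Ω,
      AEMeasurable (fun x => ENNReal.ofReal (K x y)) (volume.restrict Ω) := by
    intro y hy
    have hb : BoundaryMeasure Ω (Measure.dirac y) := by
      refine ⟨inferInstance, ?_⟩
      rw [Measure.dirac_apply' _ isClosed_frontier.measurableSet.compl]
      exact indicator_of_notMem (by simp [hy]) _
    have h1 := (hKsol (Measure.dirac y) hb).1
    have h2 : (fun x => ∫ z, K x z ∂(Measure.dirac y)) = fun x => K x y := by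
      funext x; exact integral_dirac _ y
    rw [h2] at h1
    exact h1.1.aemeasurable.ennreal_ofReal
  -- computation for scaled Dirac measures
  have hcomp : ∀ (a : ℝ≥0∞), a ≠ ⊤ → ∀ y ∈ frontier Ω,
      ∫⁻ x in Ω, poissonPot K (a • Measure.dirac y) x * ENNReal.ofReal (V x * ρ x)
        = a * c y := by
    intro a ha y hy
    have h1 : ∀ x, poissonPot K (a • Measure.dirac y) x = a * ENNReal.ofReal (K x y) := by
      intro x; rw [poissonPot, lintegral_smul_measure, lintegral_dirac, smul_eq_mul]
    calc ∫⁻ x in Ω, poissonPot K (a • Measure.dirac y) x * ENNReal.ofReal (V x * ρ x)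
        = ∫⁻ x in Ω, a * (ENNReal.ofReal (K x y) * w x) := by
          refine lintegral_congr fun x => ?_
          rw [h1 x, hw, mul_assoc]
      _ = a * ∫⁻ x in Ω, ENNReal.ofReal (K x y) * w x := lintegral_const_mul' a _ ha
      _ = a * c y := by rw [hceq y hy]
  -- lower bound
  have hlow : ∀ E : Set (Euc N), E ⊆ frontier Ω → MeasurableSet E →
      ∀ y ∈ E, (c y)⁻¹ ≤ capaV Ω V ρ K E := by
    intro E hEF hEm y hyE
    have hyF := hEF hyE
    have hmem : ∀ a : ℝ≥0∞, a ≠ ⊤ → a * c y ≤ 1 → a ≤ capaV Ω V ρ K E := by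
      intro a ha hcon
      have hfin : IsFiniteMeasure (a • Measure.dirac y) := by
        constructor
        rw [Measure.smul_apply, measure_univ, smul_eq_mul, mul_one]
        exact ha.lt_top
      have hFc : (a • Measure.dirac y) ((frontier Ω)ᶜ) = 0 := by
        rw [Measure.smul_apply, Measure.dirac_apply' _ isClosed_frontier.measurableSet.compl,
          indicator_of_notMem (by simp [hyF]), smul_eq_mul, mul_zero]
      have hEc : (a • Measure.dirac y) Eᶜ = 0 := by
        rw [Measure.smul_apply, Measure.dirac_apply' _ hEm.compl,
          indicator_of_notMem (by simp [hyE]), smul_eq_mul, mul_zero]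
      have hcon' : ∫⁻ x in Ω, poissonPot K (a • Measure.dirac y) x
          * ENNReal.ofReal (V x * ρ x) ≤ 1 := by
        rw [hcomp a ha y hyF]; exact hcon
      have hval : (a • Measure.dirac y) E = a := by
        rw [Measure.smul_apply, Measure.dirac_apply_of_mem hyE, smul_eq_mul, mul_one]
      calc a = (a • Measure.dirac y) E := hval.symm
        _ ≤ capaV Ω V ρ K E := by
            rw [capaV]
            exact le_iSup_of_le (a • Measure.dirac y) (le_iSup_of_le hfin
              (le_iSup_of_le hFc (le_iSup_of_le hEc (le_iSup_of_le hcon' le_rfl))))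
    rcases eq_top_or_lt_top (c y) with htop | hlt
    · rw [htop, ENNReal.inv_top]; exact zero_le
    · by_cases h0 : c y = 0
      · have hn : ∀ n : ℕ, (n : ℝ≥0∞) ≤ capaV Ω V ρ K E := fun n =>
          hmem n (ENNReal.natCast_ne_top n) (by rw [h0, mul_zero]; exact zero_le_one)
        have hcap : capaV Ω V ρ K E = ⊤ := by
          by_contra hne
          obtain ⟨n, hn'⟩ := ENNReal.exists_nat_gt hne
          exact absurd (hn n) (not_le.2 hn')
        rw [hcap]; exact le_top
      · exact hmem (c y)⁻¹ (ENNReal.inv_ne_top.2 h0)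
          (by rw [ENNReal.inv_mul_cancel h0 hlt.ne])
  -- upper bound
  have hup : ∀ E : Set (Euc N), E ⊆ frontier Ω → MeasurableSet E →
      capaV Ω V ρ K E ≤ ⨆ y ∈ E, (c y)⁻¹ := by
    intro E hEF hEm
    rw [capaV]
    refine iSup_le fun μ => iSup_le fun hfinμ => iSup_le fun hbd => iSup_le fun hEc =>
      iSup_le fun hadm => ?_
    haveI := hfinμ
    by_cases hμE : μ E = 0
    · rw [hμE]; exact zero_le
    have hEne : E.Nonempty := nonempty_iff_ne_empty.2 fun h => hμE (by rw [h]; exact measure_empty)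
    have hFne : (frontier Ω).Nonempty := ⟨hEne.choose, hEF hEne.choose_spec⟩
    set S : ℝ≥0∞ := ⨆ y ∈ E, (c y)⁻¹ with hS
    by_cases hStop : S = ⊤
    · rw [hStop]; exact le_top
    have hgcont : ∀ᵐ x ∂(volume.restrict Ω),
        ContinuousOn (fun y => ENNReal.ofReal (K x y)) (frontier Ω) := by
      filter_upwards [ae_restrict_mem hΩm] with x hx
      exact ENNReal.continuous_ofReal.comp_continuousOn (hKcont x hx)
    have hdouble := lintegral_double_le (frontier Ω) isClosed_frontier hFne
      (volume.restrict Ω) (fun x y => ENNReal.ofReal (K x y))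
      (fun x y => ENNReal.ofReal_ne_top) hgcont hgmeas w
      (fun x => ENNReal.ofReal_ne_top) μ hbd
    have hchain : S⁻¹ * μ E ≤ 1 := by
      calc S⁻¹ * μ E = ∫⁻ y, E.indicator (fun _ => S⁻¹) y ∂μ := by
            rw [lintegral_indicator hEm, setLIntegral_const]
        _ ≤ ∫⁻ y, (∫⁻ x, ENNReal.ofReal (K x y) * w x ∂(volume.restrict Ω)) ∂μ := by
            refine lintegral_mono fun y => ?_
            by_cases hyE : y ∈ E
            · rw [indicator_of_mem hyE]
              have h1 : (c y)⁻¹ ≤ S := by rw [hS]; exact le_biSup (fun y => (c y)⁻¹) hyE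
              have h2 : S⁻¹ ≤ c y := ENNReal.inv_le_iff_inv_le.2 h1
              rw [← hceq y (hEF hyE)]
              exact h2
            · rw [indicator_of_notMem hyE]; exact zero_le
        _ ≤ ∫⁻ x, (∫⁻ y, ENNReal.ofReal (K x y) ∂μ) * w x ∂(volume.restrict Ω) := hdouble
        _ ≤ 1 := hadm
    by_cases hS0 : S = 0
    · rw [hS0, ENNReal.inv_zero, ENNReal.top_mul hμE] at hchain
      exact absurd hchain (by simp)
    · calc μ E = (S * S⁻¹) * μ E := by
            rw [ENNReal.mul_inv_cancel hS0 hStop, one_mul]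
        _ = S * (S⁻¹ * μ E) := mul_assoc _ _ _
        _ ≤ S * 1 := mul_le_mul_right hchain S
        _ = S := mul_one S
  have hmain : ∀ E : Set (Euc N), E ⊆ frontier Ω → MeasurableSet E →
      capaV Ω V ρ K E = ⨆ y ∈ E, (c y)⁻¹ := fun E hEF hEm =>
    le_antisymm (hup E hEF hEm) (iSup₂_le fun y hy => hlow E hEF hEm y hy)
  refine ⟨fun E hE hEm => (hmain E hE hEm).le,
    fun E hE hEc => hmain E hE hEc.measurableSet,
    fun E₁ E₂ h1 h2 hm1 hm2 => ?_⟩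
  rw [hmain _ (union_subset h1 h2) (hm1.union hm2), hmain E₁ h1 hm1, hmain E₂ h2 hm2,
    iSup_union]


end
end

section
/- Assume V ≥ 0 and let μ be a good positive bounded Radon measure on ∂Ω. The following are equivalent: (i) μ(Z_V) = 0; (ii) there exists an increasing sequence of positive admissible measures {μ_n} which converges to μ in the weak* topology. -/
/- Common setup for the formalization of
   "Boundary value problems with measures for elliptic equations with singular potentials"
   by L. Véron and C. Yarur.

   Ω ⊂ ℝ^N is a bounded C² domain, V ∈ L^∞_loc(Ω) is a (nonnegative) potential,
   ρ is the first eigenfunction of -Δ in W₀^{1,2}(Ω), K = K^Ω is the Poisson kernel of Ω,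
   nrm is the outward unit normal field on ∂Ω. -/

noncomputable section

open MeasureTheory Metric Set Filter Topology ENNReal

variable {N : ℕ}

namespace VYaux
variable {α : Type*} [MeasurableSpace α]





/-- The "envelope measure" of a (possibly non-measurable) density `g` w.r.t. `μ0`:
`E ↦ ∫⁻ (lower integral) of g over E`. -/
def env (μ0 : Measure α) (g : α → ℝ≥0∞) : Measure α :=
  Measure.ofMeasurable (fun s _ => ∫⁻ x, g x ∂(μ0.restrict s))
    (by simp)
    (by
      intro s hs hd
      show ∫⁻ x, g x ∂(μ0.restrict (⋃ i, s i)) = _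
      rw [Measure.restrict_iUnion hd hs, lintegral_sum_measure])

lemma env_apply (μ0 : Measure α) (g : α → ℝ≥0∞) {s : Set α} (hs : MeasurableSet s) :
    env μ0 g s = ∫⁻ x, g x ∂(μ0.restrict s) :=
  Measure.ofMeasurable_apply s hs

lemma env_ac (μ0 : Measure α) (g : α → ℝ≥0∞) : env μ0 g ≪ μ0 := by
  refine Measure.AbsolutelyContinuous.mk (fun s hs h0 => ?_)
  rw [env_apply _ _ hs, Measure.restrict_eq_zero.2 h0, lintegral_zero_measure]

lemma lintegral_mul_env_of_measurable (μ0 : Measure α) (g : α → ℝ≥0∞) {h : α → ℝ≥0∞}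
    (hmeas : Measurable h) (hfin : ∀ᵐ x ∂μ0, h x ≠ ∞) :
    ∫⁻ x, h x * g x ∂μ0 = ∫⁻ x, h x ∂(env μ0 g) := by
  apply le_antisymm
  · -- via simple minorants of h * g
    rw [lintegral_def]
    refine iSup_le fun φ => iSup_le fun hφ => ?_
    set θ : α → ℝ≥0∞ := fun x => if h x = ∞ then 0 else φ x / h x with hθ
    have θmeas : Measurable θ :=
      Measurable.ite (hmeas (measurableSet_singleton ∞)) measurable_const
        (φ.measurable.div hmeas)
    have hθg : θ ≤ g := by
      intro x
      by_cases hx : h x = ∞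
      · simp [hθ, hx]
      · simp only [hθ, hx, if_false]
        by_cases h0 : h x = 0
        · have : φ x = 0 := by
            have h1 := hφ x
            simp only [h0, zero_mul, nonpos_iff_eq_zero] at h1
            exact h1
          simp [this]
        · rw [ENNReal.div_le_iff_le_mul (Or.inl h0) (Or.inl hx)]
          calc φ x ≤ h x * g x := hφ x
          _ = g x * h x := mul_comm _ _
    have hφθ : (fun x => (φ : α → ℝ≥0∞) x) =ᵐ[μ0] fun x => θ x * h x := by
      filter_upwards [hfin] with x hx
      simp only [hθ, hx, if_false]
      by_cases h0 : h x = 0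
      · have : φ x = 0 := by
          have h1 := hφ x
          simp only [h0, zero_mul, nonpos_iff_eq_zero] at h1
          exact h1
        simp [this, h0]
      · exact (ENNReal.div_mul_cancel h0 hx).symm
    calc φ.lintegral μ0 = ∫⁻ x, φ x ∂μ0 := (SimpleFunc.lintegral_eq_lintegral _ _).symm
      _ = ∫⁻ x, θ x * h x ∂μ0 := lintegral_congr_ae hφθ
      _ = ∫⁻ x, h x ∂(μ0.withDensity θ) :=
          (lintegral_withDensity_eq_lintegral_mul μ0 θmeas hmeas).symm
      _ ≤ ∫⁻ x, h x ∂(env μ0 g) := by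
          refine lintegral_mono' ?_ le_rfl
          refine Measure.le_iff.2 fun s hs => ?_
          rw [withDensity_apply θ hs, env_apply _ _ hs]
          exact lintegral_mono hθg
  · -- via eapprox of h
    rw [lintegral_eq_iSup_eapprox_lintegral hmeas]
    refine iSup_le fun n => ?_
    set ψ := SimpleFunc.eapprox h n with hψ
    have hψle : ∀ x, ψ x ≤ h x := fun x => by
      rw [← SimpleFunc.iSup_eapprox_apply hmeas x]
      exact le_iSup (fun m => SimpleFunc.eapprox h m x) n
    -- decompose μ0 along the fibers of ψ
    have hcover : (⋃ c : ψ.range, ψ ⁻¹' {(c : ℝ≥0∞)}) = univ := by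
      ext x
      simp only [mem_iUnion, mem_univ, iff_true, mem_preimage, mem_singleton_iff]
      exact ⟨⟨ψ x, ψ.mem_range_self x⟩, rfl⟩
    have hdisj : Pairwise (Function.onFun Disjoint fun c : ψ.range => ψ ⁻¹' {(c : ℝ≥0∞)}) := by
      intro c d hcd
      refine Set.disjoint_left.2 fun x hxc hxd => ?_
      exact hcd (Subtype.ext ((mem_singleton_iff.1 hxc).symm.trans (mem_singleton_iff.1 hxd)))
    have hμ0 : ∫⁻ x, ψ x * g x ∂μ0
        = ∑ c ∈ ψ.range, ∫⁻ x, ψ x * g x ∂(μ0.restrict (ψ ⁻¹' {c})) := by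
      conv_lhs => rw [← Measure.restrict_univ (μ := μ0), ← hcover,
        Measure.restrict_iUnion hdisj (fun c => ψ.measurableSet_fiber _),
        lintegral_sum_measure]
      rw [← Finset.tsum_subtype]
    have key : ψ.lintegral (env μ0 g) = ∫⁻ x, ψ x * g x ∂μ0 := by
      rw [hμ0, SimpleFunc.lintegral]
      refine Finset.sum_congr rfl fun c hc => ?_
      have hcfin : c ≠ ∞ := by
        obtain ⟨x, hx⟩ := Set.mem_range.1 (SimpleFunc.mem_range.1 hc)
        exact hx ▸ (SimpleFunc.eapprox_lt_top h n x).ne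
      rw [env_apply _ _ (ψ.measurableSet_fiber _), ← lintegral_const_mul' c _ hcfin]
      refine lintegral_congr_ae ?_
      filter_upwards [ae_restrict_mem (ψ.measurableSet_fiber c)] with x hx
      rw [mem_preimage, mem_singleton_iff] at hx
      rw [hx]
    calc ψ.lintegral (env μ0 g) = ∫⁻ x, ψ x * g x ∂μ0 := key
      _ ≤ ∫⁻ x, h x * g x ∂μ0 := lintegral_mono fun x => mul_le_mul_left (hψle x) _

lemma lintegral_mul_env (μ0 : Measure α) (g : α → ℝ≥0∞) {h : α → ℝ≥0∞}
    (hmeas : AEMeasurable h μ0) (hfin : ∀ᵐ x ∂μ0, h x ≠ ∞) :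
    ∫⁻ x, h x * g x ∂μ0 = ∫⁻ x, h x ∂(env μ0 g) := by
  have h1 : ∫⁻ x, h x * g x ∂μ0 = ∫⁻ x, hmeas.mk h x * g x ∂μ0 := by
    refine lintegral_congr_ae ?_
    filter_upwards [hmeas.ae_eq_mk] with x hx
    rw [hx]
  have h2 : ∫⁻ x, h x ∂(env μ0 g) = ∫⁻ x, hmeas.mk h x ∂(env μ0 g) :=
    lintegral_congr_ae ((env_ac μ0 g).ae_eq hmeas.ae_eq_mk)
  have h3 : ∀ᵐ x ∂μ0, hmeas.mk h x ≠ ∞ := by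
    filter_upwards [hfin, hmeas.ae_eq_mk] with x h1 h2
    rwa [← h2]
  rw [h1, h2]
  exact lintegral_mul_env_of_measurable μ0 g hmeas.measurable_mk h3






lemma tsum_iSup_of_monotone {ι : Type*} (a : ι → ℕ → ℝ≥0∞) (h : ∀ i, Monotone (a i)) :
    ∑' i, ⨆ n, a i n = ⨆ n, ∑' i, a i n := by
  apply le_antisymm
  · rw [ENNReal.tsum_eq_iSup_sum]
    refine iSup_le fun s => ?_
    rw [ENNReal.finsetSum_iSup_of_monotone fun i => h i]
    exact iSup_mono fun n => ENNReal.sum_le_tsum s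
  · exact iSup_le fun n => ENNReal.tsum_le_tsum fun i => le_iSup (a i) n

/-- The supremum of a monotone sequence of measures, as a measure with
`m E = ⨆ n, μs n E` on measurable sets. -/
def supMeasure (μs : ℕ → Measure α) (hmono : Monotone μs) : Measure α :=
  Measure.ofMeasurable (fun s _ => ⨆ n, μs n s) (by simp)
    (by
      intro s hs hd
      show ⨆ n, μs n (⋃ i, s i) = ∑' i, ⨆ n, μs n (s i)
      rw [tsum_iSup_of_monotone _ fun i n m hnm => Measure.le_iff'.1 (hmono hnm) (s i)]
      exact iSup_congr fun n => measure_iUnion hd hs)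

lemma supMeasure_apply (μs : ℕ → Measure α) (hmono : Monotone μs) {s : Set α}
    (hs : MeasurableSet s) : supMeasure μs hmono s = ⨆ n, μs n s :=
  Measure.ofMeasurable_apply s hs

lemma lintegral_supMeasure (μs : ℕ → Measure α) (hmono : Monotone μs) {h : α → ℝ≥0∞}
    (hmeas : Measurable h) :
    ∫⁻ x, h x ∂(supMeasure μs hmono) = ⨆ n, ∫⁻ x, h x ∂(μs n) := by
  have key : ∀ ψ : SimpleFunc α ℝ≥0∞,
      ψ.lintegral (supMeasure μs hmono) = ⨆ n, ψ.lintegral (μs n) := by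
    intro ψ
    simp only [SimpleFunc.lintegral]
    have h1 : ∀ c ∈ ψ.range, c * supMeasure μs hmono (ψ ⁻¹' {c})
        = ⨆ n, c * μs n (ψ ⁻¹' {c}) := fun c _ => by
      rw [supMeasure_apply _ _ (ψ.measurableSet_fiber c), ENNReal.mul_iSup]
    rw [Finset.sum_congr rfl h1]
    exact ENNReal.finsetSum_iSup_of_monotone fun c n m hnm =>
      mul_le_mul_right (Measure.le_iff'.1 (hmono hnm) _) c
  rw [lintegral_eq_iSup_eapprox_lintegral hmeas]
  simp_rw [key]
  rw [iSup_comm]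
  exact iSup_congr fun n => (lintegral_eq_iSup_eapprox_lintegral hmeas).symm

lemma exists_discretization {β : Type*} [MetricSpace β] [MeasurableSpace β]
    [OpensMeasurableSpace β] {s : Set β} (hs : IsCompact s) {ε : ℝ} (hε : 0 < ε) :
    ∃ (k : ℕ) (c : Fin k → β) (A : Fin k → Set β),
      (∀ i, c i ∈ s) ∧ (∀ i, MeasurableSet (A i)) ∧
      (∀ y ∈ s, ∃ i, y ∈ A i ∧ ∀ j, y ∈ A j → j = i) ∧
      (∀ i, ∀ y ∈ A i, dist y (c i) < ε) := by
  classical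
  obtain ⟨b, hbs, hbfin, hcov⟩ := hs.elim_finite_subcover_image
    (fun (y : β) (_ : y ∈ s) => isOpen_ball (x := y) (ε := ε))
    (fun y hy => mem_biUnion hy (mem_ball_self hε))
  set l := hbfin.toFinset.toList with hl
  refine ⟨l.length, fun i => l.get i, fun i =>
    (ball (l.get i) ε) \ ⋃ (j : Fin l.length) (_ : j < i), ball (l.get j) ε, ?_, ?_, ?_, ?_⟩
  · intro i
    have : l.get i ∈ l := l.get_mem i
    exact hbs (hbfin.mem_toFinset.1 (Finset.mem_toList.1 this))
  · intro i
    exact measurableSet_ball.diff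
      (MeasurableSet.iUnion fun j => MeasurableSet.iUnion fun _ => measurableSet_ball)
  · intro y hy
    have hex : ∃ i : Fin l.length, y ∈ ball (l.get i) ε := by
      obtain ⟨x, hxb, hxy⟩ := mem_iUnion₂.1 (hcov hy)
      obtain ⟨i, hi⟩ := List.mem_iff_get.1 (Finset.mem_toList.2 (hbfin.mem_toFinset.2 hxb))
      exact ⟨i, by rwa [hi]⟩
    set S : Finset (Fin l.length) :=
      Finset.univ.filter (fun i => y ∈ ball (l.get i) ε) with hS
    have hSne : S.Nonempty := by
      obtain ⟨i, hi⟩ := hex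
      exact ⟨i, by
        rw [hS, Finset.mem_filter]
        exact ⟨Finset.mem_univ i, hi⟩⟩
    set i₀ := S.min' hSne with hi₀
    have hi₀S : i₀ ∈ S := S.min'_mem hSne
    have hi₀ball : y ∈ ball (l.get i₀) ε := by
      have h2 := hi₀S
      rw [hS, Finset.mem_filter] at h2
      exact h2.2
    refine ⟨i₀, ⟨hi₀ball, ?_⟩, ?_⟩
    · intro hmem
      obtain ⟨j, hj⟩ := mem_iUnion.1 hmem
      obtain ⟨hji, hjball⟩ := mem_iUnion.1 hj
      have : i₀ ≤ j := S.min'_le j (by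
        rw [hS, Finset.mem_filter]; exact ⟨Finset.mem_univ j, hjball⟩)
      exact absurd hji (not_lt.2 this)
    · intro j hjA
      by_contra hne
      have hjball : y ∈ ball (l.get j) ε := hjA.1
      have hjS : j ∈ S := by
        rw [hS, Finset.mem_filter]; exact ⟨Finset.mem_univ j, hjball⟩
      have h1 : i₀ ≤ j := S.min'_le j hjS
      have h2 : i₀ < j := lt_of_le_of_ne h1 (fun hh => hne hh.symm)
      exact hjA.2 (mem_iUnion.2 ⟨i₀, mem_iUnion.2 ⟨h2, hi₀ball⟩⟩)
  · intro i y hy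
    exact mem_ball.1 hy.1


end VYaux

/-- **Theorem 3.11.** Assume V ≥ 0 and let μ be a good positive bounded Radon measure
on ∂Ω.  Then μ(Z_V) = 0 if and only if there exists an increasing sequence {μ_n} of
positive admissible measures converging to μ in the weak* topology. -/
theorem good_measure_vanishes_on_ZV_iff_increasing_admissible_approximation
    {N : ℕ} (hN : 2 ≤ N) (Ω : Set (Euc N)) (hΩ : IsC2Domain Ω)
    (V ρ : Euc N → ℝ) (hV0 : ∀ x ∈ Ω, 0 ≤ V x) (hVloc : LocBddOn Ω V)
    (hρ : IsFirstEigenfunction Ω ρ)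
    (nrm : Euc N → Euc N) (hnrm : IsOuterNormal Ω nrm)
    (K : Euc N → Euc N → ℝ) (hK : IsPoissonKernelFor Ω (fun _ => 0) ρ nrm K)
    (μ : Measure (Euc N)) (hμ : BoundaryMeasure Ω μ)
    (hgood : GoodMeasure Ω V ρ nrm μ) :
    μ (ZV Ω V ρ K) = 0 ↔
      ∃ μn : ℕ → Measure (Euc N), (∀ n, BoundaryMeasure Ω (μn n)) ∧
        Monotone μn ∧ (∀ n, Admissible Ω V ρ K (μn n)) ∧
        ∀ f : Euc N → ℝ, Continuous f →
          Tendsto (fun n => ∫ y, f y ∂(μn n)) atTop (𝓝 (∫ y, f y ∂μ)) := by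
  classical
  obtain ⟨hΩo, hΩb, hΩne, -⟩ := hΩ
  haveI : IsFiniteMeasure μ := hμ.1
  have hΩmeas : MeasurableSet Ω := hΩo.measurableSet
  have hFrc : IsClosed (frontier Ω) := isClosed_frontier
  have hFrm : MeasurableSet (frontier Ω) := hFrc.measurableSet
  have hclcpt : IsCompact (closure Ω) := hΩb.isCompact_closure
  have hFrcpt : IsCompact (frontier Ω) :=
    hclcpt.of_isClosed_subset hFrc frontier_subset_closure
  obtain ⟨lam, hlam, hρcont, hρc2, hρpos, hρ0, hρeq⟩ := hρ
  set g : Euc N → ℝ≥0∞ := fun x => ENNReal.ofReal (V x * ρ x) with hgdef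
  set volO : Measure (Euc N) := volume.restrict Ω with hvolOdef
  set τ : Measure (Euc N) := VYaux.env volO g with hτdef
  have hτac : τ ≪ volO := VYaux.env_ac _ _
  have hvolOuniv : volO Set.univ < ∞ := by
    rw [hvolOdef, Measure.restrict_apply_univ]
    exact hΩb.measure_lt_top
  have haeΩ : ∀ᵐ x ∂volO, x ∈ Ω := ae_restrict_mem hΩmeas
  have hτΩc : τ Ωᶜ = 0 := by
    rw [hτdef, VYaux.env_apply _ _ hΩmeas.compl, Measure.restrict_eq_zero.2, lintegral_zero_measure]
    rw [hvolOdef, Measure.restrict_apply hΩmeas.compl, Set.compl_inter_self, measure_empty]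
  haveI : Nontrivial (Euc N) := by
    refine ⟨⟨EuclideanSpace.single ⟨0, by omega⟩ (1 : ℝ), 0, fun h => ?_⟩⟩
    have h1 : EuclideanSpace.single (⟨0, by omega⟩ : Fin N) (1 : ℝ) ⟨0, by omega⟩ = 0 := by
      rw [h]; rfl
    rw [EuclideanSpace.single_apply] at h1
    simp at h1
  have hcne : Ωᶜ.Nonempty := by
    rw [Set.nonempty_compl]
    intro hU
    exact NormedSpace.unbounded_univ ℝ (Euc N) (hU ▸ hΩb)
  have hΩcc : IsClosed Ωᶜ := hΩo.isClosed_compl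
  obtain ⟨Cρ, hCρ⟩ := hclcpt.exists_bound_of_continuousOn hρcont
  haveI hτsf : SigmaFinite τ := by
    set Q : ℕ → Set (Euc N) :=
      fun j => {x | (1 : ℝ) / (j + 1) ≤ infDist x Ωᶜ} ∩ closure Ω with hQdef
    have hQclosed : ∀ j, IsClosed (Q j) := fun j =>
      (isClosed_le continuous_const (continuous_infDist_pt Ωᶜ)).inter isClosed_closure
    have hQcpt : ∀ j, IsCompact (Q j) := fun j =>
      hclcpt.of_isClosed_subset (hQclosed j) Set.inter_subset_right
    have hQΩ : ∀ j, Q j ⊆ Ω := by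
      intro j x hx
      have hpos : 0 < infDist x Ωᶜ := lt_of_lt_of_le (by positivity) hx.1
      have := (hΩcc.notMem_iff_infDist_pos hcne).2 hpos
      simpa using this
    have hQfin : ∀ j, τ (Q j ∪ Ωᶜ) < ∞ := by
      intro j
      obtain ⟨Cj, hCj⟩ := hVloc (Q j) (hQΩ j) (hQcpt j)
      refine lt_of_le_of_lt (measure_union_le _ _) ?_
      rw [hτΩc, add_zero, hτdef, VYaux.env_apply _ _ (hQclosed j).measurableSet]
      have hbound : ∀ᵐ x ∂(volO.restrict (Q j)), g x ≤ ENNReal.ofReal (Cj * Cρ) := by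
        filter_upwards [ae_restrict_mem (hQclosed j).measurableSet] with x hx
        refine ENNReal.ofReal_le_ofReal ?_
        calc V x * ρ x ≤ |V x * ρ x| := le_abs_self _
          _ = |V x| * |ρ x| := abs_mul _ _
          _ ≤ Cj * Cρ := by
              have h1 := hCj x hx
              have h2 := hCρ x hx.2
              exact mul_le_mul h1 h2 (abs_nonneg _) ((abs_nonneg _).trans h1)
      calc ∫⁻ x, g x ∂(volO.restrict (Q j))
          ≤ ∫⁻ _, ENNReal.ofReal (Cj * Cρ) ∂(volO.restrict (Q j)) := lintegral_mono_ae hbound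
        _ = ENNReal.ofReal (Cj * Cρ) * volO.restrict (Q j) Set.univ := lintegral_const _
        _ ≤ ENNReal.ofReal (Cj * Cρ) * volO Set.univ := by
            refine mul_le_mul_right ?_ _
            rw [Measure.restrict_apply_univ]
            exact measure_mono (Set.subset_univ _)
        _ < ∞ := ENNReal.mul_lt_top ENNReal.ofReal_lt_top hvolOuniv
    refine ⟨⟨⟨fun j => Q j ∪ Ωᶜ, fun _ => trivial, hQfin, ?_⟩⟩⟩
    rw [Set.eq_univ_iff_forall]
    intro x
    by_cases hx : x ∈ Ω
    · have hpos : 0 < infDist x Ωᶜ :=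
        (hΩcc.notMem_iff_infDist_pos hcne).1 (by simpa using hx)
      obtain ⟨j, hj⟩ := exists_nat_one_div_lt hpos
      refine Set.mem_iUnion.2 ⟨j, Or.inl ⟨?_, subset_closure hx⟩⟩
      show (1 : ℝ) / (j + 1) ≤ infDist x Ωᶜ
      exact le_of_lt (by exact_mod_cast hj)
    · exact Set.mem_iUnion.2 ⟨0, Or.inr hx⟩
  set Ft : Euc N → ℝ≥0∞ := fun y => ∫⁻ x, ENNReal.ofReal (K x y) ∂τ with hFtdef
  have hbdry_dirac : ∀ y ∈ frontier Ω, BoundaryMeasure Ω (Measure.dirac y) := by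
    intro y hy
    refine ⟨inferInstance, ?_⟩
    rw [Measure.dirac_apply' _ hFrm.compl]
    simp [hy]
  have hKxInt : ∀ y ∈ frontier Ω, IntegrableOn (fun x => K x y) Ω volume := by
    intro y hy
    have h1 := (hK.2.2 _ (hbdry_dirac y hy)).1
    simpa [integral_dirac] using h1
  have hKx : ∀ y ∈ frontier Ω, AEMeasurable (fun x => ENNReal.ofReal (K x y)) volO :=
    fun y hy => ENNReal.measurable_ofReal.comp_aemeasurable
      (hKxInt y hy).aestronglyMeasurable.aemeasurable
  have hbdry_ae : ∀ (ν : Measure (Euc N)), BoundaryMeasure Ω ν →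
      ∀ᵐ y ∂ν, y ∈ frontier Ω := by
    intro ν hν
    rw [MeasureTheory.ae_iff]
    exact hν.2
  have hKyInt : ∀ (ν : Measure (Euc N)), BoundaryMeasure Ω ν → ∀ x ∈ Ω,
      Integrable (fun y => K x y) ν := by
    intro ν hν x hx
    haveI := hν.1
    have hsm : AEStronglyMeasurable (fun y => K x y) ν := by
      have h1 : ν.restrict (frontier Ω) = ν :=
        Measure.restrict_eq_self_of_ae_mem (hbdry_ae ν hν)
      have h2 : AEMeasurable (fun y => K x y) (ν.restrict (frontier Ω)) :=
        (hK.2.1 x hx).aemeasurable hFrm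
      rw [h1] at h2
      exact h2.aestronglyMeasurable
    obtain ⟨C, hC⟩ := hFrcpt.exists_bound_of_continuousOn (hK.2.1 x hx)
    refine Integrable.mono' (integrable_const C) hsm ?_
    filter_upwards [hbdry_ae ν hν] with y hy using hC y hy
  have hPot : ∀ (ν : Measure (Euc N)), BoundaryMeasure Ω ν → ∀ x ∈ Ω,
      poissonPot K ν x = ENNReal.ofReal (∫ y, K x y ∂ν) := by
    intro ν hν x hx
    have hnn : 0 ≤ᵐ[ν] fun y => K x y := by
      filter_upwards [hbdry_ae ν hν] with y hy using hK.1 x hx y hy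
    rw [poissonPot]
    exact (ofReal_integral_eq_lintegral_ofReal (hKyInt ν hν x hx) hnn).symm
  have hPotMeas : ∀ (ν : Measure (Euc N)), BoundaryMeasure Ω ν →
      AEMeasurable (poissonPot K ν) volO ∧ (∀ᵐ x ∂volO, poissonPot K ν x ≠ ∞) := by
    intro ν hν
    have hInt := (hK.2.2 ν hν).1
    have hae : poissonPot K ν =ᵐ[volO] fun x => ENNReal.ofReal (∫ y, K x y ∂ν) := by
      filter_upwards [haeΩ] with x hx using hPot ν hν x hx
    constructor
    · exact (ENNReal.measurable_ofReal.comp_aemeasurable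
        hInt.aestronglyMeasurable.aemeasurable).congr hae.symm
    · filter_upwards [hae] with x hx
      rw [hx]
      exact ENNReal.ofReal_ne_top
  have hjoint : ∀ (ν : Measure (Euc N)), BoundaryMeasure Ω ν →
      AEMeasurable (fun p : Euc N × Euc N => ENNReal.ofReal (K p.1 p.2)) (τ.prod ν) := by
    intro ν hν
    haveI := hν.1
    have hdis : ∀ m : ℕ, ∃ (k : ℕ) (c : Fin k → Euc N) (A : Fin k → Set (Euc N)),
        (∀ i, c i ∈ frontier Ω) ∧ (∀ i, MeasurableSet (A i)) ∧
        (∀ y ∈ frontier Ω, ∃ i, y ∈ A i ∧ ∀ j, y ∈ A j → j = i) ∧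
        (∀ i, ∀ y ∈ A i, dist y (c i) < 1 / (m + 1)) :=
      fun m => VYaux.exists_discretization hFrcpt (by positivity)
    choose k c A hcmem hAmeas hAcover hAdist using hdis
    set T : ℕ → Euc N × Euc N → ℝ≥0∞ := fun m p =>
      ∑ i : Fin (k m), (A m i).indicator (fun _ => (1 : ℝ≥0∞)) p.2
        * ENNReal.ofReal (K p.1 (c m i)) with hTdef
    have hTmeas : ∀ m, AEMeasurable (T m) (τ.prod ν) := by
      intro m
      refine Finset.aemeasurable_fun_sum _ fun i _ => ?_
      have h1 : AEMeasurable (fun x => ENNReal.ofReal (K x (c m i))) τ :=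
        (hKx _ (hcmem m i)).mono_ac hτac
      exact (((measurable_one.indicator (hAmeas m i)).comp
        measurable_snd).aemeasurable).mul h1.comp_fst
    have haeprod : ∀ᵐ p ∂(τ.prod ν), p.1 ∈ Ω ∧ p.2 ∈ frontier Ω := by
      have h1 : (τ.prod ν) ((Ωᶜ ×ˢ (Set.univ : Set (Euc N)))
          ∪ ((Set.univ : Set (Euc N)) ×ˢ (frontier Ω)ᶜ)) = 0 := by
        refine le_antisymm ((measure_union_le _ _).trans ?_) zero_le
        rw [Measure.prod_prod, Measure.prod_prod, hτΩc, hν.2]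
        simp
      rw [MeasureTheory.ae_iff]
      refine measure_mono_null ?_ h1
      intro p hp
      simp only [Set.mem_setOf_eq, not_and_or] at hp
      rcases hp with hp | hp
      · exact Set.mem_union_left _ ⟨hp, trivial⟩
      · exact Set.mem_union_right _ ⟨trivial, hp⟩
    refine aemeasurable_of_tendsto_metrizable_ae atTop hTmeas ?_
    filter_upwards [haeprod] with p hp
    obtain ⟨hx, hy⟩ := hp
    have hval : ∀ m : ℕ, ∃ i : Fin (k m),
        T m p = ENNReal.ofReal (K p.1 (c m i)) ∧ dist p.2 (c m i) < 1 / (m + 1) := by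
      intro m
      obtain ⟨i, hiA, hiuniq⟩ := hAcover m p.2 hy
      refine ⟨i, ?_, hAdist m i p.2 hiA⟩
      show (∑ i : Fin (k m), (A m i).indicator (fun _ => (1 : ℝ≥0∞)) p.2
        * ENNReal.ofReal (K p.1 (c m i))) = _
      rw [Finset.sum_eq_single i]
      · rw [Set.indicator_of_mem hiA, one_mul]
      · intro j _ hji
        rw [Set.indicator_of_notMem (fun hmem => hji (hiuniq j hmem)), zero_mul]
      · intro habs
        exact absurd (Finset.mem_univ i) habs
    choose sel hsel hseld using hval
    have hcm0 : Tendsto (fun m => c m (sel m)) atTop (𝓝 p.2) := by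
      rw [tendsto_iff_dist_tendsto_zero]
      refine squeeze_zero (g := fun m : ℕ => 1 / ((m : ℝ) + 1)) (fun m => dist_nonneg)
        (fun m => le_of_lt (by rw [dist_comm]; exact hseld m))
        tendsto_one_div_add_atTop_nhds_zero_nat
    have hcm : Tendsto (fun m => c m (sel m)) atTop (𝓝[frontier Ω] p.2) :=
      tendsto_nhdsWithin_iff.2 ⟨hcm0, Filter.Eventually.of_forall fun m => hcmem m (sel m)⟩
    have hKt : Tendsto (fun m => K p.1 (c m (sel m))) atTop (𝓝 (K p.1 p.2)) :=
      (((hK.2.1 p.1 hx).continuousWithinAt hy).tendsto).comp hcm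
    have := (ENNReal.continuous_ofReal.tendsto (K p.1 p.2)).comp hKt
    exact this.congr fun m => (hsel m).symm
  have hmaster : ∀ (ν : Measure (Euc N)), BoundaryMeasure Ω ν →
      (∫⁻ x in Ω, poissonPot K ν x * ENNReal.ofReal (V x * ρ x)) = ∫⁻ y, Ft y ∂ν := by
    intro ν hν
    haveI := hν.1
    obtain ⟨hPm, hPfin⟩ := hPotMeas ν hν
    have h1 : (∫⁻ x, poissonPot K ν x * g x ∂volO) = ∫⁻ x, poissonPot K ν x ∂τ :=
      VYaux.lintegral_mul_env volO g hPm hPfin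
    have h2 : (∫⁻ x, poissonPot K ν x ∂τ) = ∫⁻ y, Ft y ∂ν :=
      lintegral_lintegral_swap (f := fun x y => ENNReal.ofReal (K x y)) (hjoint ν hν)
    exact h1.trans h2
  have hFtMeas : ∀ (ν : Measure (Euc N)), BoundaryMeasure Ω ν → AEMeasurable Ft ν := by
    intro ν hν
    haveI := hν.1
    have hswap : AEMeasurable (fun q : Euc N × Euc N => ENNReal.ofReal (K q.2 q.1))
        (ν.prod τ) := (hjoint ν hν).prod_swap
    have hG := hswap.measurable_mk
    have hae := Measure.ae_ae_of_ae_prod hswap.ae_eq_mk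
    have hFtae : Ft =ᵐ[ν] fun y => ∫⁻ x, hswap.mk _ (y, x) ∂τ := by
      filter_upwards [hae] with y hy
      exact lintegral_congr_ae hy
    exact (hG.lintegral_prod_right'.aemeasurable).congr hFtae.symm
  have hZVFt : ∀ y ∈ frontier Ω, (∫⁻ x in Ω, ENNReal.ofReal (K x y * V x * ρ x)) = Ft y := by
    intro y hy
    have h1 : (fun x => ENNReal.ofReal (K x y * V x * ρ x)) =ᵐ[volO]
        fun x => ENNReal.ofReal (K x y) * g x := by
      filter_upwards [haeΩ] with x hx
      rw [hgdef, mul_assoc, ENNReal.ofReal_mul (hK.1 x hx y hy)]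
    calc (∫⁻ x in Ω, ENNReal.ofReal (K x y * V x * ρ x))
        = ∫⁻ x, ENNReal.ofReal (K x y) * g x ∂volO := lintegral_congr_ae h1
      _ = ∫⁻ x, ENNReal.ofReal (K x y) ∂τ :=
          VYaux.lintegral_mul_env volO g (hKx y hy)
            (Filter.Eventually.of_forall fun x => ENNReal.ofReal_ne_top)
      _ = Ft y := rfl
  constructor
  · -- forward direction
    intro hZ
    obtain ⟨F', hF'meas, hF'ae⟩ := hFtMeas μ hμ
    set Sn : ℕ → Set (Euc N) := fun n => frontier Ω ∩ {y | F' y ≤ n} with hSndef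
    have hSnmeas : ∀ n, MeasurableSet (Sn n) := fun n =>
      hFrm.inter (measurableSet_le hF'meas measurable_const)
    have hSnmono : Monotone Sn := by
      intro n m hnm y hy
      exact ⟨hy.1, le_trans hy.2 ((Nat.cast_le (α := ℝ≥0∞)).2 hnm)⟩
    have hbdn : ∀ n, BoundaryMeasure Ω (μ.restrict (Sn n)) := by
      intro n
      refine ⟨⟨?_⟩, ?_⟩
      · rw [Measure.restrict_apply_univ]
        exact measure_lt_top μ _
      · rw [Measure.restrict_apply hFrm.compl]
        exact le_antisymm (le_trans (measure_mono Set.inter_subset_left) hμ.2.le) zero_le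
    have hae1 : ∀ᵐ y ∂μ, y ∈ frontier Ω := hbdry_ae μ hμ
    have haecov : ∀ᵐ y ∂μ, y ∈ ⋃ n, Sn n := by
      have hae2 : ∀ᵐ y ∂μ, y ∉ ZV Ω V ρ K := by
        rw [MeasureTheory.ae_iff]
        simpa [not_not] using hZ
      filter_upwards [hae1, hae2, hF'ae] with y h1 h2 h3
      have hFt : Ft y ≠ ∞ := by
        intro heq
        exact h2 ⟨h1, by rw [hZVFt y h1]; exact heq⟩
      have h4 : F' y < ∞ := by
        rw [← h3]
        exact lt_top_iff_ne_top.2 hFt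
      obtain ⟨n, hn⟩ := ENNReal.exists_nat_gt h4.ne
      exact Set.mem_iUnion.2 ⟨n, h1, hn.le⟩
    refine ⟨fun n => μ.restrict (Sn n), hbdn, ?_, ?_, ?_⟩
    · exact fun n m hnm => Measure.restrict_mono (hSnmono hnm) le_rfl
    · -- admissibility
      intro n
      show (∫⁻ x in Ω, poissonPot K (μ.restrict (Sn n)) x
        * ENNReal.ofReal (V x * ρ x)) < ⊤
      rw [hmaster _ (hbdn n)]
      have hres : ∀ᵐ y ∂(μ.restrict (Sn n)), y ∈ Sn n := ae_restrict_mem (hSnmeas n)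
      have hFtF' : Ft =ᵐ[μ.restrict (Sn n)] F' :=
        hF'ae.filter_mono (ae_mono Measure.restrict_le_self)
      calc ∫⁻ y, Ft y ∂(μ.restrict (Sn n))
          = ∫⁻ y, F' y ∂(μ.restrict (Sn n)) := lintegral_congr_ae hFtF'
        _ ≤ ∫⁻ _, (n : ℝ≥0∞) ∂(μ.restrict (Sn n)) := by
            refine lintegral_mono_ae ?_
            filter_upwards [hres] with y hy
            exact hy.2
        _ = (n : ℝ≥0∞) * μ.restrict (Sn n) Set.univ := lintegral_const _
        _ < ⊤ := by
            refine ENNReal.mul_lt_top (ENNReal.natCast_lt_top n) ?_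
            rw [Measure.restrict_apply_univ]
            exact measure_lt_top μ _
    · -- weak* convergence
      intro f hf
      obtain ⟨C, hC⟩ := hFrcpt.exists_bound_of_continuousOn hf.continuousOn
      have heq : ∀ n, (∫ y, f y ∂(μ.restrict (Sn n))) = ∫ y, (Sn n).indicator f y ∂μ :=
        fun n => (integral_indicator (hSnmeas n)).symm
      simp_rw [heq]
      refine tendsto_integral_of_dominated_convergence (fun _ => C)
        (fun n => (hf.stronglyMeasurable.indicator (hSnmeas n)).aestronglyMeasurable)
        (integrable_const C) ?_ ?_
      · intro n
        filter_upwards [hae1] with y hy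
        by_cases hmem : y ∈ Sn n
        · rw [Set.indicator_of_mem hmem]
          exact hC y hy
        · rw [Set.indicator_of_notMem hmem]
          simpa using le_trans (norm_nonneg (f y)) (hC y hy)
      · filter_upwards [haecov] with y hy
        obtain ⟨n0, hn0⟩ := Set.mem_iUnion.1 hy
        refine tendsto_const_nhds.congr' ?_
        filter_upwards [Filter.eventually_ge_atTop n0] with n hn
        exact (Set.indicator_of_mem (hSnmono hn hn0) f).symm
  · -- backward direction
    rintro ⟨μn, hbd, hmono, hadm, hconv⟩
    haveI : ∀ n, IsFiniteMeasure (μn n) := fun n => (hbd n).1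
    have hμnZ : ∀ n, ∀ᵐ y ∂(μn n), Ft y < ∞ := by
      intro n
      have h1 := hmaster _ (hbd n)
      have h2 : (∫⁻ x in Ω, poissonPot K (μn n) x * ENNReal.ofReal (V x * ρ x)) < ⊤ :=
        hadm n
      rw [h1] at h2
      exact ae_lt_top' (hFtMeas _ (hbd n)) h2.ne
    set m : Measure (Euc N) := VYaux.supMeasure μn hmono with hmdef
    have hmapp : ∀ {s : Set (Euc N)}, MeasurableSet s → m s = ⨆ n, μn n s :=
      fun hs => VYaux.supMeasure_apply _ _ hs
    have hμnle : ∀ n, μn n ≤ m := by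
      intro n
      refine Measure.le_iff.2 fun s hs => ?_
      rw [hmapp hs]
      exact le_iSup (fun j => μn j s) n
    have hconv1 := hconv (fun _ => (1 : ℝ)) continuous_const
    simp_rw [integral_const, smul_eq_mul, mul_one] at hconv1
    have hmono1 : Monotone fun n => (μn n Set.univ).toReal := fun a b hab =>
      ENNReal.toReal_mono (measure_ne_top _ _) (Measure.le_iff'.1 (hmono hab) _)
    have hble : ∀ n, μn n Set.univ ≤ μ Set.univ := by
      intro n
      have h1 := hmono1.ge_of_tendsto hconv1 n
      exact (ENNReal.toReal_le_toReal (measure_ne_top _ _) (measure_ne_top _ _)).1 h1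
    haveI : IsFiniteMeasure m := ⟨by
      rw [hmapp MeasurableSet.univ]
      exact lt_of_le_of_lt (iSup_le hble) (measure_lt_top μ _)⟩
    have hmB : m = μ := by
      refine MeasureTheory.ext_of_forall_lintegral_eq_of_IsFiniteMeasure fun f => ?_
      have hfr : Continuous fun y => ((f y : NNReal) : ℝ) :=
        NNReal.continuous_coe.comp f.continuous
      have hconvf := hconv _ hfr
      obtain ⟨B, hB⟩ := f.bounded
      have hbnd : ∀ y, ((f y : NNReal) : ℝ) ≤ ((f (Classical.arbitrary _) : NNReal) : ℝ) + B := by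
        intro y
        have h1 := hB y (Classical.arbitrary _)
        rw [NNReal.dist_eq] at h1
        have := abs_le.1 h1
        linarith [this.1]
      have hint : ∀ (ν : Measure (Euc N)), IsFiniteMeasure ν →
          Integrable (fun y => ((f y : NNReal) : ℝ)) ν := by
        intro ν hνf
        haveI := hνf
        refine Integrable.mono' (integrable_const (((f (Classical.arbitrary _) : NNReal) : ℝ) + B))
          hfr.aestronglyMeasurable (Filter.Eventually.of_forall fun y => ?_)
        show ‖((f y : NNReal) : ℝ)‖ ≤ _
        rw [Real.norm_of_nonneg (f y).coe_nonneg]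
        exact hbnd y
      have hlin : ∀ (ν : Measure (Euc N)), IsFiniteMeasure ν →
          (∫⁻ y, (f y : ℝ≥0∞) ∂ν) = ENNReal.ofReal (∫ y, ((f y : NNReal) : ℝ) ∂ν) := by
        intro ν hνf
        rw [ofReal_integral_eq_lintegral_ofReal (hint ν hνf)
          (Filter.Eventually.of_forall fun y => (f y).coe_nonneg)]
        refine lintegral_congr fun y => ?_
        rw [ENNReal.ofReal_coe_nnreal]
      have hsup : (∫⁻ y, (f y : ℝ≥0∞) ∂m) = ⨆ n, ∫⁻ y, (f y : ℝ≥0∞) ∂(μn n) :=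
        VYaux.lintegral_supMeasure μn hmono
          (measurable_coe_nnreal_ennreal.comp f.continuous.measurable)
      have hmono2 : Monotone fun n => ∫⁻ y, (f y : ℝ≥0∞) ∂(μn n) :=
        fun a b hab => lintegral_mono' (hmono hab) le_rfl
      have htend : Tendsto (fun n => ∫⁻ y, (f y : ℝ≥0∞) ∂(μn n)) atTop
          (𝓝 (ENNReal.ofReal (∫ y, ((f y : NNReal) : ℝ) ∂μ))) := by
        have h1 : (fun n => ∫⁻ y, (f y : ℝ≥0∞) ∂(μn n))
            = fun n => ENNReal.ofReal (∫ y, ((f y : NNReal) : ℝ) ∂(μn n)) :=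
          funext fun n => hlin (μn n) inferInstance
        rw [h1]
        exact (ENNReal.continuous_ofReal.tendsto _).comp hconvf
      rw [hsup, hlin μ inferInstance]
      exact tendsto_nhds_unique (tendsto_atTop_iSup hmono2) htend
    -- conclude
    obtain ⟨F'', hF''meas, hF''ae⟩ := hFtMeas μ hμ
    have hdiffnull : μ {y | Ft y ≠ F'' y} = 0 := by
      have := hF''ae
      rw [Filter.EventuallyEq, MeasureTheory.ae_iff] at this
      exact this
    set Z0 : Set (Euc N) := frontier Ω ∩ {y | F'' y = ∞} with hZ0def
    have hZ0meas : MeasurableSet Z0 :=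
      hFrm.inter (hF''meas (measurableSet_singleton ∞))
    have hZsub : ZV Ω V ρ K ⊆ Z0 ∪ {y | Ft y ≠ F'' y} := by
      rintro y ⟨hy1, hy2⟩
      have hFt : Ft y = ∞ := by rw [← hZVFt y hy1]; exact hy2
      by_cases hcase : F'' y = ∞
      · exact Or.inl ⟨hy1, hcase⟩
      · exact Or.inr (by rw [Set.mem_setOf_eq, hFt]; exact fun h => hcase h.symm)
    have hZ0n : ∀ n, μn n Z0 = 0 := by
      intro n
      have hsub : Z0 ⊆ {y | ¬ Ft y < ∞} ∪ toMeasurable μ {y | Ft y ≠ F'' y} := by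
        rintro y ⟨hy1, hy2⟩
        by_cases hcase : Ft y = F'' y
        · exact Or.inl (by rw [Set.mem_setOf_eq, hcase, hy2]; exact lt_irrefl _)
        · exact Or.inr (subset_toMeasurable _ _ hcase)
      refine le_antisymm (le_trans (measure_mono hsub) ?_) zero_le
      refine le_trans (measure_union_le _ _) ?_
      have h1 : μn n {y | ¬ Ft y < ∞} = 0 := by
        rw [← MeasureTheory.ae_iff]
        exact hμnZ n
      have h2 : μn n (toMeasurable μ {y | Ft y ≠ F'' y}) = 0 := by
        refine le_antisymm ?_ zero_le
        calc μn n (toMeasurable μ {y | Ft y ≠ F'' y})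
            ≤ m (toMeasurable μ {y | Ft y ≠ F'' y}) :=
              Measure.le_iff.1 (hμnle n) _ (measurableSet_toMeasurable _ _)
          _ = μ (toMeasurable μ {y | Ft y ≠ F'' y}) := by rw [hmB]
          _ = μ {y | Ft y ≠ F'' y} := measure_toMeasurable _
          _ = 0 := hdiffnull
      rw [h1, h2, add_zero]
    have hZ0 : μ Z0 = 0 := by
      rw [← hmB, hmapp hZ0meas]
      simp [hZ0n]
    refine le_antisymm ?_ zero_le
    calc μ (ZV Ω V ρ K) ≤ μ (Z0 ∪ {y | Ft y ≠ F'' y}) := measure_mono hZsub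
      _ ≤ μ Z0 + μ {y | Ft y ≠ F'' y} := measure_union_le _ _
      _ = 0 := by rw [hZ0, hdiffnull, add_zero]


end
end
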